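/- The tensor T = a₁⊗b₂⊗c₂ + a₂⊗b₁⊗c₂ + a₂⊗b₂⊗c₁ + a₁⊗b₁⊗c₃ + a₁⊗b₃⊗c₁ + a₃⊗b₁⊗c₁ ∈ ℂ³⊗ℂ³⊗ℂ³ (with {a_i}, {b_i}, {c_i} bases) has tensor rank exactly 5. -/

import Mathlib

open scoped TensorProduct

section Aux

variable {A B C : Type*} [AddCommGroup A] [Module ℂ A] [AddCommGroup B] [Module ℂ B]
  [AddCommGroup C] [Module ℂ C]

/-- Trilinear evaluation of a tensor in `A ⊗ (B ⊗ C)` against three functionals. -/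
noncomputable def ev3 (f : A →ₗ[ℂ] ℂ) (g : B →ₗ[ℂ] ℂ) (h : C →ₗ[ℂ] ℂ) :
    A ⊗[ℂ] (B ⊗[ℂ] C) →ₗ[ℂ] ℂ :=
  TensorProduct.lift (f.smulRight (TensorProduct.lift (g.smulRight h)))

lemma ev3_tmul (f : A →ₗ[ℂ] ℂ) (g : B →ₗ[ℂ] ℂ) (h : C →ₗ[ℂ] ℂ)
    (x : A) (y : B) (z : C) :
    ev3 f g h (x ⊗ₜ[ℂ] (y ⊗ₜ[ℂ] z)) = f x * (g y * h z) := by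
  simp [ev3, smul_eq_mul, mul_assoc]

lemma det3_aux (u w p q : Fin 3 → ℂ) :
    (Matrix.of fun i k => u i * w k + p i * q k).det = 0 := by
  simp only [Matrix.det_fin_three, Matrix.of_apply]
  ring

lemma lb_aux (a : Module.Basis (Fin 3) ℂ A) (b : Module.Basis (Fin 3) ℂ B) (c : Module.Basis (Fin 3) ℂ C)
    {r : ℕ} (hr : r < 5) (x : Fin r → A) (y : Fin r → B) (z : Fin r → C)
    (hT : (a 0 ⊗ₜ[ℂ] (b 1 ⊗ₜ[ℂ] c 1) + a 1 ⊗ₜ[ℂ] (b 0 ⊗ₜ[ℂ] c 1) + a 1 ⊗ₜ[ℂ] (b 1 ⊗ₜ[ℂ] c 0)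
          + a 0 ⊗ₜ[ℂ] (b 0 ⊗ₜ[ℂ] c 2) + a 0 ⊗ₜ[ℂ] (b 2 ⊗ₜ[ℂ] c 0) + a 2 ⊗ₜ[ℂ] (b 0 ⊗ₜ[ℂ] c 0)
          : A ⊗[ℂ] (B ⊗[ℂ] C))
          = ∑ i, x i ⊗ₜ[ℂ] (y i ⊗ₜ[ℂ] z i)) : False := by
  -- The fundamental scalar identity obtained by contracting with three functionals.
  have key : ∀ (f : A →ₗ[ℂ] ℂ) (g : B →ₗ[ℂ] ℂ) (h : C →ₗ[ℂ] ℂ),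
      f (a 0) * (g (b 1) * h (c 1)) + f (a 1) * (g (b 0) * h (c 1))
        + f (a 1) * (g (b 1) * h (c 0)) + f (a 0) * (g (b 0) * h (c 2))
        + f (a 0) * (g (b 2) * h (c 0)) + f (a 2) * (g (b 0) * h (c 0))
        = ∑ s, f (x s) * (g (y s) * h (z s)) := by
    intro f g h
    have h2 := congrArg (ev3 f g h) hT
    simpa [map_add, map_sum, ev3_tmul] using h2
  -- If the contracted slice matrix is a sum of two rank-one matrices, then `g (b 0) = 0`.
  have hsmall : ∀ (g : B →ₗ[ℂ] ℂ) (u w p q : Fin 3 → ℂ),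
      (∀ i k : Fin 3, (∑ s, (a.coord i) (x s) * (g (y s) * (c.coord k) (z s)))
        = u i * w k + p i * q k) → g (b 0) = 0 := by
    intro g u w p q hcollapse
    have hE : (!![g (b 2), g (b 1), g (b 0); g (b 1), g (b 0), 0; g (b 0), 0, 0]
        : Matrix (Fin 3) (Fin 3) ℂ) = Matrix.of fun i k => u i * w k + p i * q k := by
      ext i k
      rw [show (Matrix.of fun i k => u i * w k + p i * q k) i k
          = u i * w k + p i * q k from rfl,
        ← hcollapse i k, ← key (a.coord i) g (c.coord k)]
      fin_cases i <;> fin_cases k <;>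
        simp [Module.Basis.coord_apply, Module.Basis.repr_self, Finsupp.single_apply,
          Matrix.vecHead, Matrix.vecTail]
    have hdet : (!![g (b 2), g (b 1), g (b 0); g (b 1), g (b 0), 0; g (b 0), 0, 0]
        : Matrix (Fin 3) (Fin 3) ℂ).det = 0 := by
      rw [hE]; exact det3_aux u w p q
    have hd2 : (!![g (b 2), g (b 1), g (b 0); g (b 1), g (b 0), 0; g (b 0), 0, 0]
        : Matrix (Fin 3) (Fin 3) ℂ).det = -(g (b 0))^3 := by
      simp [Matrix.det_fin_three, Matrix.vecHead, Matrix.vecTail]; ring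
    have h3 : (g (b 0))^3 = 0 := neg_eq_zero.mp (hd2.symm.trans hdet)
    exact pow_eq_zero_iff (by norm_num : (3:ℕ) ≠ 0) |>.mp h3
  -- The vectors `y s` span `B`.
  have hspan : Submodule.span ℂ (Set.range y) = ⊤ := by
    set Y : Matrix (Fin 3) (Fin r) ℂ := Matrix.of fun j s => b.repr (y s) j with hYdef
    set Q : Matrix (Fin r) (Fin 3) ℂ :=
      Matrix.of fun s k => (a.coord 0) (x s) * (c.coord k) (z s) with hQdef
    set P : Matrix (Fin 3) (Fin 3) ℂ := !![0,0,1;0,1,0;1,0,0] with hPdef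
    have hYQ : Y * Q = P := by
      ext j k
      have h1 : (Y * Q) j k
          = ∑ s, (a.coord 0) (x s) * ((b.coord j) (y s) * (c.coord k) (z s)) := by
        simp only [Matrix.mul_apply, hYdef, hQdef, Matrix.of_apply, Module.Basis.coord_apply]
        exact Finset.sum_congr rfl (fun s _ => by ring)
      rw [h1, ← key (a.coord 0) (b.coord j) (c.coord k)]
      fin_cases j <;> fin_cases k <;>
        simp [hPdef, Module.Basis.coord_apply, Module.Basis.repr_self, Finsupp.single_apply,
          Matrix.vecHead, Matrix.vecTail]
    have hPP : P * P = 1 := by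
      ext i j
      fin_cases i <;> fin_cases j <;>
        simp [hPdef, Matrix.mul_apply, Fin.sum_univ_three, Matrix.vecHead, Matrix.vecTail]
    have hYW : Y * (Q * P) = 1 := by rw [← Matrix.mul_assoc, hYQ, hPP]
    rw [Submodule.eq_top_iff']
    intro v
    have hv : v = ∑ s, ((Q * P).mulVec (fun j => b.repr v j)) s • y s := by
      apply b.repr.injective
      ext j
      rw [map_sum]
      simp only [map_smul, Finsupp.coe_finset_sum, Finset.sum_apply, Finsupp.smul_apply,
        smul_eq_mul]
      have h2 : ∑ s, ((Q * P).mulVec (fun j => b.repr v j)) s * (b.repr (y s)) j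
          = (Y.mulVec ((Q * P).mulVec fun j => b.repr v j)) j := by
        simp only [Matrix.mulVec, dotProduct, hYdef, Matrix.of_apply]
        exact Finset.sum_congr rfl (fun s _ => by ring)
      rw [h2, Matrix.mulVec_mulVec, hYW, Matrix.one_mulVec]
    rw [hv]
    exact Submodule.sum_mem _ fun s _ =>
      Submodule.smul_mem _ _ (Submodule.subset_span ⟨s, rfl⟩)
  -- conclusion from vanishing of all `v.coord i' (b 0)` for a basis `v`
  have hconc : ∀ v : Module.Basis (Fin 3) ℂ B, (∀ i' : Fin 3, v.coord i' (b 0) = 0) → False := by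
    intro v hv
    have hb0 : b 0 = 0 := by
      have := Module.Basis.sum_repr v (b 0)
      rw [Finset.sum_congr rfl (fun i' _ => by
        rw [show v.repr (b 0) i' = v.coord i' (b 0) from (Module.Basis.coord_apply v i' (b 0)).symm,
          hv i', zero_smul])] at this
      simpa using this.symm
    exact b.ne_zero 0 hb0
  interval_cases r
  · -- r = 0
    have h0 := hsmall (b.coord 0) 0 0 0 0 (by intro i k; simp)
    simp [Module.Basis.coord_apply, Module.Basis.repr_self] at h0
  · -- r = 1
    have h0 := hsmall (b.coord 0) (fun i => a.coord i (x 0))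
      (fun k => b.coord 0 (y 0) * c.coord k (z 0)) 0 0
      (by intro i k; simp [Fin.sum_univ_one]; try ring)
    simp [Module.Basis.coord_apply, Module.Basis.repr_self] at h0
  · -- r = 2
    have h0 := hsmall (b.coord 0) (fun i => a.coord i (x 0))
      (fun k => b.coord 0 (y 0) * c.coord k (z 0))
      (fun i => a.coord i (x 1)) (fun k => b.coord 0 (y 1) * c.coord k (z 1))
      (by intro i k; simp [Fin.sum_univ_two]; try ring)
    simp [Module.Basis.coord_apply, Module.Basis.repr_self] at h0
  · -- r = 3
    have hcard : Fintype.card (Fin 3) = Module.finrank ℂ B := by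
      simp [Module.finrank_eq_card_basis b]
    set v := basisOfTopLeSpanOfCardEqFinrank y hspan.ge hcard with hvdef
    have hvy : ∀ j : Fin 3, v j = y j := by
      intro j; rw [hvdef, coe_basisOfTopLeSpanOfCardEqFinrank]
    refine hconc v (fun i' => ?_)
    apply hsmall (v.coord i') (fun i2 => a.coord i2 (x i')) (fun k => c.coord k (z i')) 0 0
    intro i2 k
    have hy3 : ∀ j : Fin 3, (v.coord i') (y j) = if j = i' then 1 else 0 := by
      intro j; rw [← hvy j, Module.Basis.coord_apply, Module.Basis.repr_self, Finsupp.single_apply]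
    simp only [hy3, mul_ite, mul_one, mul_zero, ite_mul, zero_mul, one_mul,
      Finset.sum_ite_eq', Finset.mem_univ, if_true, Pi.zero_apply]
    ring
  · -- r = 4
    haveI : Module.Finite ℂ B := Module.Finite.of_basis b
    have hnli : ¬ LinearIndependent ℂ y := by
      intro hli
      have hle := hli.fintype_card_le_finrank
      rw [Module.finrank_eq_card_basis b] at hle
      simp at hle
    obtain ⟨coef, hrel, i, hci⟩ := Fintype.not_linearIndependent_iff.mp hnli
    have hspan' : ⊤ ≤ Submodule.span ℂ (Set.range (y ∘ i.succAbove)) := by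
      rw [← hspan]
      apply Submodule.span_le.mpr
      rintro _ ⟨t, rfl⟩
      by_cases ht : t = i
      · subst ht
        rw [Fin.sum_univ_succAbove (fun s => coef s • y s) t] at hrel
        have hrel2 : coef t • y t
            = -∑ j, coef (t.succAbove j) • y (t.succAbove j) :=
          eq_neg_of_add_eq_zero_left hrel
        have h5 : y t = (coef t)⁻¹ • (coef t • y t) := by
          rw [smul_smul, inv_mul_cancel₀ hci, one_smul]
        rw [h5, hrel2]
        refine Submodule.smul_mem _ _ (Submodule.neg_mem _ (Submodule.sum_mem _ fun j _ =>
          Submodule.smul_mem _ _ (Submodule.subset_span ⟨j, rfl⟩)))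
      · obtain ⟨j, hj⟩ := Fin.exists_succAbove_eq ht
        exact Submodule.subset_span ⟨j, by simp [hj]⟩
    have hcard : Fintype.card (Fin 3) = Module.finrank ℂ B := by
      simp [Module.finrank_eq_card_basis b]
    set v := basisOfTopLeSpanOfCardEqFinrank (y ∘ i.succAbove) hspan' hcard with hvdef
    have hvy : ∀ j : Fin 3, v j = y (i.succAbove j) := by
      intro j; rw [hvdef, coe_basisOfTopLeSpanOfCardEqFinrank]; rfl
    refine hconc v (fun i' => ?_)
    apply hsmall (v.coord i') (fun i2 => a.coord i2 (x (i.succAbove i')))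
      (fun k => c.coord k (z (i.succAbove i')))
      (fun i2 => a.coord i2 (x i)) (fun k => v.coord i' (y i) * c.coord k (z i))
    intro i2 k
    rw [Fin.sum_univ_succAbove
      (fun s => (a.coord i2) (x s) * ((v.coord i') (y s) * (c.coord k) (z s))) i]
    have hy3 : ∀ j : Fin 3, (v.coord i') (y (i.succAbove j)) = if j = i' then 1 else 0 := by
      intro j; rw [← hvy j, Module.Basis.coord_apply, Module.Basis.repr_self, Finsupp.single_apply]
    simp only [hy3, mul_ite, mul_one, mul_zero, ite_mul, zero_mul, one_mul,
      Finset.sum_ite_eq', Finset.mem_univ, if_true]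
    ring

end Aux

/-- The tensor `a₁⊗b₂⊗c₂ + a₂⊗b₁⊗c₂ + a₂⊗b₂⊗c₁ + a₁⊗b₁⊗c₃ + a₁⊗b₃⊗c₁ + a₃⊗b₁⊗c₁`
(with `{aᵢ}, {bᵢ}, {cᵢ}` bases of 3-dimensional spaces) has tensor rank exactly 5. -/
theorem rank_type_iii_tensor_eq_five {A B C : Type*}
    [AddCommGroup A] [Module ℂ A] [AddCommGroup B] [Module ℂ B] [AddCommGroup C] [Module ℂ C]
    (a : Module.Basis (Fin 3) ℂ A) (b : Module.Basis (Fin 3) ℂ B) (c : Module.Basis (Fin 3) ℂ C) :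
    IsLeast {r : ℕ | ∃ (x : Fin r → A) (y : Fin r → B) (z : Fin r → C),
        (a 0 ⊗ₜ[ℂ] (b 1 ⊗ₜ[ℂ] c 1) + a 1 ⊗ₜ[ℂ] (b 0 ⊗ₜ[ℂ] c 1) + a 1 ⊗ₜ[ℂ] (b 1 ⊗ₜ[ℂ] c 0)
          + a 0 ⊗ₜ[ℂ] (b 0 ⊗ₜ[ℂ] c 2) + a 0 ⊗ₜ[ℂ] (b 2 ⊗ₜ[ℂ] c 0) + a 2 ⊗ₜ[ℂ] (b 0 ⊗ₜ[ℂ] c 0)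
          : A ⊗[ℂ] (B ⊗[ℂ] C))
          = ∑ i, x i ⊗ₜ[ℂ] (y i ⊗ₜ[ℂ] z i)} 5 := by
  constructor
  · refine ⟨![a 0, a 1, a 2, a 0 + a 1, a 0 + a 2],
      ![b 0, b 1, b 2, b 0 + b 1, b 0 + b 2],
      ![c 2 - c 1 - c 0, c 0 - c 1, -(c 0), c 1, c 0], ?_⟩
    simp only [Fin.sum_univ_five, Matrix.cons_val_zero, Matrix.cons_val_one, Matrix.head_cons,
      Matrix.cons_val_two, Matrix.tail_cons, Matrix.cons_val_three, Matrix.cons_val_four,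
      TensorProduct.tmul_add, TensorProduct.add_tmul, TensorProduct.tmul_sub,
      TensorProduct.sub_tmul, TensorProduct.tmul_neg, TensorProduct.neg_tmul]
    abel
  · rintro r ⟨x, y, z, hT⟩
    by_contra hlt
    push_neg at hlt
    exact lb_aux a b c hlt x y z hT
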